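/- arXiv:1706.06844 — 3 statements merged into one kernel-verified Lean document; each statement's English description precedes it below -/
import Mathlib

section
/- Let γ ∈ (1,2). Then the WSGD weights satisfy: w_0^{(γ)} = γ/2, w_1^{(γ)} = (2-γ-γ²)/2 < 0, w_2^{(γ)} = γ(γ²+γ-4)/4, and the tail is monotonically decreasing and nonnegative below w_0^{(γ)}: namely 1 ≥ w_0^{(γ)} ≥ w_3^{(γ)} ≥ w_4^{(γ)} ≥ ⋯ ≥ 0, i.e. w_3^{(γ)} ≤ w_0^{(γ)} ≤ 1 and w_k^{(γ)} ≥ w_{k+1}^{(γ)} ≥ 0 for all k ≥ 3. -/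
open scoped Real Topology

/-- Alternating fractional binomial coefficients
`g_k^{(γ)} = (-1)^k (γ choose k) = ((-1)^k / k!) · γ(γ-1)⋯(γ-k+1)`. -/
noncomputable def gcoef (γ : ℝ) (k : ℕ) : ℝ :=
  (-1 : ℝ) ^ k / (Nat.factorial k) * ∏ i ∈ Finset.range k, (γ - i)

/-- WSGD weights: `w_0^{(γ)} = (γ/2) g_0^{(γ)}`,
`w_k^{(γ)} = (γ/2) g_k^{(γ)} + ((2-γ)/2) g_{k-1}^{(γ)}` for `k ≥ 1`. -/
noncomputable def w (γ : ℝ) : ℕ → ℝ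
  | 0 => γ / 2 * gcoef γ 0
  | (k + 1) => γ / 2 * gcoef γ (k + 1) + (2 - γ) / 2 * gcoef γ k

lemma gcoef_succ (γ : ℝ) (k : ℕ) :
    gcoef γ (k + 1) = gcoef γ k * (((k : ℝ) - γ) / (k + 1)) := by
  have hk : ((Nat.factorial k : ℝ)) ≠ 0 := by
    exact_mod_cast Nat.factorial_ne_zero k
  have hk1 : ((k : ℝ) + 1) ≠ 0 := by positivity
  simp only [gcoef, Finset.prod_range_succ, pow_succ, Nat.factorial_succ]
  push_cast
  field_simp
  ring

lemma gcoef_nonneg (γ : ℝ) (hγ1 : 1 < γ) (hγ2 : γ < 2) :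
    ∀ k, 2 ≤ k → 0 ≤ gcoef γ k := by
  intro k hk
  induction k with
  | zero => omega
  | succ n ih =>
    rcases Nat.lt_or_ge n 2 with h | h
    · interval_cases n
      · omega
      · have : gcoef γ 2 = γ * (γ - 1) / 2 := by
          simp [gcoef, Finset.prod_range_succ, Nat.factorial]
          ring
        rw [this]
        nlinarith
    · rw [gcoef_succ]
      have h1 := ih h
      have h2 : (0:ℝ) ≤ ((n : ℝ) - γ) / (n + 1) := by
        apply div_nonneg
        · have : (2:ℝ) ≤ n := by exact_mod_cast h
          linarith
        · positivity
      positivity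

lemma gcoef_anti (γ : ℝ) (hγ1 : 1 < γ) (hγ2 : γ < 2) :
    ∀ k, 2 ≤ k → gcoef γ (k + 1) ≤ gcoef γ k := by
  intro k hk
  rw [gcoef_succ]
  have h1 := gcoef_nonneg γ hγ1 hγ2 k hk
  have hkr : (2:ℝ) ≤ k := by exact_mod_cast hk
  have h2 : ((k : ℝ) - γ) / (k + 1) ≤ 1 := by
    rw [div_le_one (by positivity)]
    linarith
  calc gcoef γ k * (((k : ℝ) - γ) / (k + 1)) ≤ gcoef γ k * 1 := by
        apply mul_le_mul_of_nonneg_left h2 h1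
    _ = gcoef γ k := mul_one _

theorem wsgd_weights_properties (γ : ℝ) (hγ1 : 1 < γ) (hγ2 : γ < 2) :
    w γ 0 = γ / 2 ∧
    w γ 1 = (2 - γ - γ ^ 2) / 2 ∧ w γ 1 < 0 ∧
    w γ 2 = γ * (γ ^ 2 + γ - 4) / 4 ∧
    w γ 0 ≤ 1 ∧ w γ 3 ≤ w γ 0 ∧
    (∀ k : ℕ, 3 ≤ k → w γ (k + 1) ≤ w γ k ∧ 0 ≤ w γ k) := by
  have hg0 : gcoef γ 0 = 1 := by simp [gcoef]
  have hg1 : gcoef γ 1 = -γ := by simp [gcoef, Nat.factorial]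
  have hg2 : gcoef γ 2 = γ * (γ - 1) / 2 := by
    simp [gcoef, Finset.prod_range_succ, Nat.factorial]; ring
  have hg3 : gcoef γ 3 = γ * (γ - 1) * (2 - γ) / 6 := by
    simp [gcoef, Finset.prod_range_succ, Nat.factorial]; ring
  refine ⟨by simp [w, hg0], by simp [w, hg0, hg1]; ring, ?_, ?_, ?_, ?_, ?_⟩
  · show γ / 2 * gcoef γ 1 + (2 - γ) / 2 * gcoef γ 0 < 0
    rw [hg0, hg1]; nlinarith
  · show γ / 2 * gcoef γ 2 + (2 - γ) / 2 * gcoef γ 1 = γ * (γ ^ 2 + γ - 4) / 4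
    rw [hg1, hg2]; ring
  · show γ / 2 * gcoef γ 0 ≤ 1
    rw [hg0]; linarith
  · show γ / 2 * gcoef γ 3 + (2 - γ) / 2 * gcoef γ 2 ≤ γ / 2 * gcoef γ 0
    rw [hg0, hg2, hg3]; nlinarith [sq_nonneg (γ - 1), sq_nonneg (2 - γ), sq_nonneg (γ*(γ-1)*(2-γ))]
  · intro k hk
    obtain ⟨j, rfl⟩ : ∃ j, k = j + 1 := ⟨k - 1, by omega⟩
    have hj : 2 ≤ j := by omega
    have hj1 : 2 ≤ j + 1 := by omega
    constructor
    · show γ / 2 * gcoef γ (j + 1 + 1) + (2 - γ) / 2 * gcoef γ (j + 1) ≤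
        γ / 2 * gcoef γ (j + 1) + (2 - γ) / 2 * gcoef γ j
      have h1 := gcoef_anti γ hγ1 hγ2 (j + 1) hj1
      have h2 := gcoef_anti γ hγ1 hγ2 j hj
      nlinarith
    · show 0 ≤ γ / 2 * gcoef γ (j + 1) + (2 - γ) / 2 * gcoef γ j
      have h1 := gcoef_nonneg γ hγ1 hγ2 (j + 1) hj1
      have h2 := gcoef_nonneg γ hγ1 hγ2 j hj
      nlinarith
end

section
/- Let γ ∈ (1,2). Then the series ∑_{j=0}^∞ w_j^{(γ)} converges to 0, and every partial sum from index 2 onward is strictly negative: ∑_{j=0}^n w_j^{(γ)} < 0 for all n ≥ 2. -/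
open scoped Real Topology

lemma gcoef_eq (γ : ℝ) (k : ℕ) :
    gcoef γ k = (∏ i ∈ Finset.range k, ((i : ℝ) - γ)) / (Nat.factorial k) := by
  have h : ∏ i ∈ Finset.range k, ((i : ℝ) - γ)
      = (-1 : ℝ) ^ k * ∏ i ∈ Finset.range k, (γ - (i : ℝ)) := by
    rw [show (-1:ℝ)^k = ∏ _i ∈ Finset.range k, (-1:ℝ) by simp, ← Finset.prod_mul_distrib]
    exact Finset.prod_congr rfl fun i _ => by ring
  rw [gcoef, h]
  ring

lemma sum_gcoef (γ : ℝ) (n : ℕ) :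
    ∑ k ∈ Finset.range (n + 1), gcoef γ k
      = (∏ i ∈ Finset.range n, ((i : ℝ) + 1 - γ)) / (Nat.factorial n) := by
  induction n with
  | zero => simp [gcoef]
  | succ n ih =>
      rw [Finset.sum_range_succ, ih, gcoef_eq]
      have h1 : ∏ i ∈ Finset.range (n + 1), ((i : ℝ) - γ)
          = (∏ i ∈ Finset.range n, ((i : ℝ) + 1 - γ)) * (0 - γ) := by
        rw [Finset.prod_range_succ']
        congr 1
        · exact Finset.prod_congr rfl fun i _ => by push_cast; ring
        · norm_num
      rw [h1, Finset.prod_range_succ, Nat.factorial_succ]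
      have hn : (Nat.factorial n : ℝ) ≠ 0 := by exact_mod_cast n.factorial_ne_zero
      have hn1 : ((n : ℝ) + 1) ≠ 0 := by positivity
      push_cast
      field_simp
      ring


/-- Partial sums of `w` in terms of partial sums of `gcoef`. -/
lemma sum_w (γ : ℝ) (n : ℕ) :
    ∑ j ∈ Finset.range (n + 1), w γ j
      = γ / 2 * (∑ k ∈ Finset.range (n + 1), gcoef γ k)
        + (2 - γ) / 2 * (∑ k ∈ Finset.range n, gcoef γ k) := by
  induction n with
  | zero => simp [w]
  | succ n ih =>
      rw [Finset.sum_range_succ, ih, show w γ (n + 1)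
        = γ / 2 * gcoef γ (n + 1) + (2 - γ) / 2 * gcoef γ n from rfl,
        Finset.sum_range_succ (fun k => gcoef γ k) (n + 1),
        Finset.sum_range_succ (fun k => gcoef γ k) n]
      ring

/-- abbreviation for the closed form partial sum of gcoef -/
noncomputable def Gc (γ : ℝ) (n : ℕ) : ℝ :=
  (∏ i ∈ Finset.range n, ((i : ℝ) + 1 - γ)) / (Nat.factorial n)

lemma Gc_neg (γ : ℝ) (hγ1 : 1 < γ) (hγ2 : γ < 2) (n : ℕ) (hn : 1 ≤ n) :
    Gc γ n < 0 := by
  obtain ⟨m, rfl⟩ := Nat.exists_eq_add_of_le hn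
  have hP : ∏ i ∈ Finset.range (1 + m), ((i : ℝ) + 1 - γ) < 0 := by
    rw [add_comm 1 m, Finset.prod_range_succ']
    have hpos : 0 < ∏ k ∈ Finset.range m, (((k+1:ℕ) : ℝ) + 1 - γ) := by
      apply Finset.prod_pos
      intro i _
      have : (0:ℝ) ≤ i := Nat.cast_nonneg i
      push_cast
      linarith
    have : ((0:ℕ):ℝ) + 1 - γ < 0 := by push_cast; linarith
    exact mul_neg_of_pos_of_neg hpos this
  have hf : (0:ℝ) < (Nat.factorial (1 + m) : ℝ) := by
    exact_mod_cast (1 + m).factorial_pos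
  exact div_neg_of_neg_of_pos hP hf

lemma prod_add_one_eq_factorial (m : ℕ) :
    ∏ i ∈ Finset.range m, ((i : ℝ) + 1) = (Nat.factorial m : ℝ) := by
  induction m with
  | zero => simp
  | succ m ihm => rw [Finset.prod_range_succ, ihm, Nat.factorial_succ]; push_cast; ring

lemma Gc_bound (γ : ℝ) (hγ1 : 1 < γ) (hγ2 : γ < 2) (n : ℕ) (hn : 1 ≤ n) :
    -Gc γ n ≤ (γ - 1) / n := by
  obtain ⟨m, rfl⟩ := Nat.exists_eq_add_of_le hn
  have hfpos : (0:ℝ) < (Nat.factorial (1 + m) : ℝ) := by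
    exact_mod_cast (1 + m).factorial_pos
  rw [Gc, neg_div', div_le_div_iff₀ hfpos (by positivity)]
  have h1 : -∏ i ∈ Finset.range (1 + m), ((i : ℝ) + 1 - γ)
      = (γ - 1) * ∏ i ∈ Finset.range m, ((i : ℝ) + 2 - γ) := by
    rw [add_comm 1 m, Finset.prod_range_succ']
    have : ∏ i ∈ Finset.range m, (((i:ℕ)+1 : ℝ) + 1 - γ)
        = ∏ i ∈ Finset.range m, ((i : ℝ) + 2 - γ) :=
      Finset.prod_congr rfl fun i _ => by push_cast; ring
    push_cast
    rw [show ∏ i ∈ Finset.range m, ((i:ℝ) + 1 + 1 - γ)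
        = ∏ i ∈ Finset.range m, ((i : ℝ) + 2 - γ) from
      Finset.prod_congr rfl fun i _ => by ring]
    ring
  rw [h1]
  have h2 : ∏ i ∈ Finset.range m, ((i : ℝ) + 2 - γ)
      ≤ ∏ i ∈ Finset.range m, ((i : ℝ) + 1) := by
    apply Finset.prod_le_prod
    · intro i _; have : (0:ℝ) ≤ i := Nat.cast_nonneg i; linarith
    · intro i _; linarith
  have h3 := prod_add_one_eq_factorial m
  have h4 : ((1 + m : ℕ) : ℝ) * (Nat.factorial m : ℝ) = (Nat.factorial (1 + m) : ℝ) := by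
    push_cast [add_comm 1 m, Nat.factorial_succ]
    ring
  have hm1 : (0:ℝ) < ((1+m:ℕ):ℝ) := by positivity
  calc ((γ - 1) * ∏ i ∈ Finset.range m, ((i : ℝ) + 2 - γ)) * ((1 + m : ℕ):ℝ)
      ≤ ((γ - 1) * (Nat.factorial m : ℝ)) * ((1 + m : ℕ):ℝ) := by
        rw [h3] at h2
        have hγ' : (0:ℝ) ≤ γ - 1 := by linarith
        exact mul_le_mul_of_nonneg_right (mul_le_mul_of_nonneg_left h2 hγ') hm1.le
    _ = (γ - 1) * (Nat.factorial (1 + m) : ℝ) := by rw [← h4]; ring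

lemma gcoef_pos (γ : ℝ) (hγ1 : 1 < γ) (hγ2 : γ < 2) (m : ℕ) :
    0 < gcoef γ (m + 2) := by
  rw [gcoef_eq]
  have hP : 0 < ∏ i ∈ Finset.range (m + 2), ((i : ℝ) - γ) := by
    induction m with
    | zero =>
        rw [Finset.prod_range_succ, Finset.prod_range_one]
        push_cast
        nlinarith
    | succ m ihm =>
        rw [Finset.prod_range_succ]
        have h2 : (0:ℝ) < ((m+2:ℕ):ℝ) - γ := by push_cast; linarith
        exact mul_pos ihm h2
  have hf : (0:ℝ) < (Nat.factorial (m+2) : ℝ) := by exact_mod_cast (m+2).factorial_pos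
  positivity

lemma w_nonneg (γ : ℝ) (hγ1 : 1 < γ) (hγ2 : γ < 2) (k : ℕ) :
    0 ≤ w γ (k + 3) := by
  have h1 := gcoef_pos γ hγ1 hγ2 (k + 1)
  have h2 := gcoef_pos γ hγ1 hγ2 k
  show 0 ≤ γ / 2 * gcoef γ (k + 2 + 1) + (2 - γ) / 2 * gcoef γ (k + 2)
  have : k + 2 + 1 = k + 1 + 2 := by ring
  rw [this]
  nlinarith

lemma sum_w_eq_Gc (γ : ℝ) (n : ℕ) :
    ∑ j ∈ Finset.range (n + 2), w γ j
      = γ / 2 * Gc γ (n + 1) + (2 - γ) / 2 * Gc γ n := by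
  rw [show n + 2 = (n + 1) + 1 from rfl, sum_w, sum_gcoef, sum_gcoef]
  rfl

lemma sum_w_neg (γ : ℝ) (hγ1 : 1 < γ) (hγ2 : γ < 2) (n : ℕ) (hn : 1 ≤ n) :
    ∑ j ∈ Finset.range (n + 2), w γ j < 0 := by
  rw [sum_w_eq_Gc]
  have h1 := Gc_neg γ hγ1 hγ2 (n + 1) (by omega)
  have h2 := Gc_neg γ hγ1 hγ2 n hn
  nlinarith

lemma tendsto_Gc (γ : ℝ) (hγ1 : 1 < γ) (hγ2 : γ < 2) :
    Filter.Tendsto (fun n : ℕ => Gc γ n) Filter.atTop (𝓝 0) := by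
  have hneg : Filter.Tendsto (fun n : ℕ => -Gc γ n) Filter.atTop (𝓝 0) := by
    apply squeeze_zero'
    · filter_upwards [Filter.eventually_ge_atTop 1] with n hn
      have := Gc_neg γ hγ1 hγ2 n hn
      linarith
    · filter_upwards [Filter.eventually_ge_atTop 1] with n hn
      exact Gc_bound γ hγ1 hγ2 n hn
    · have : Filter.Tendsto (fun n : ℕ => (γ - 1) * (1 / (n:ℝ))) Filter.atTop (𝓝 ((γ-1) * 0)) :=
        tendsto_one_div_atTop_nhds_zero_nat.const_mul _
      simpa [div_eq_mul_inv, mul_comm] using this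
  have := hneg.neg
  simpa using this

lemma tendsto_partial_sums (γ : ℝ) (hγ1 : 1 < γ) (hγ2 : γ < 2) :
    Filter.Tendsto (fun n : ℕ => ∑ j ∈ Finset.range n, w γ j) Filter.atTop (𝓝 0) := by
  rw [← Filter.tendsto_add_atTop_iff_nat 2]
  have hG := tendsto_Gc γ hγ1 hγ2
  have hG1 : Filter.Tendsto (fun n : ℕ => Gc γ (n + 1)) Filter.atTop (𝓝 0) :=
    hG.comp (Filter.tendsto_add_atTop_nat 1)
  have : Filter.Tendsto (fun n : ℕ => γ / 2 * Gc γ (n + 1) + (2 - γ) / 2 * Gc γ n)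
      Filter.atTop (𝓝 (γ / 2 * 0 + (2 - γ) / 2 * 0)) :=
    (hG1.const_mul _).add (hG.const_mul _)
  simp only [mul_zero, add_zero] at this
  exact this.congr fun n => (sum_w_eq_Gc γ n).symm

/-- The series `∑_{j=0}^∞ w_j^{(γ)}` converges to `0`, and the partial sums
`∑_{j=0}^n w_j^{(γ)}` are strictly negative for every `n ≥ 2`. -/
theorem wsgd_weights_sum (γ : ℝ) (hγ1 : 1 < γ) (hγ2 : γ < 2) :
    HasSum (fun j : ℕ => w γ j) 0 ∧
    ∀ n : ℕ, 2 ≤ n → ∑ j ∈ Finset.range (n + 1), w γ j < 0 := by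
  constructor
  · -- summability
    have hsplit : ∀ n : ℕ, ∑ i ∈ Finset.range n, w γ (i + 3)
        = ∑ j ∈ Finset.range (n + 3), w γ j - ∑ j ∈ Finset.range 3, w γ j := by
      intro n
      induction n with
      | zero => simp
      | succ n ih =>
          rw [Finset.sum_range_succ, ih, show n + 1 + 3 = (n + 3) + 1 from rfl,
            Finset.sum_range_succ (fun j => w γ j) (n + 3), show n + 3 = n + 3 from rfl]
          ring
    have hbound : ∀ n : ℕ, ∑ i ∈ Finset.range n, w γ (i + 3)
        ≤ -∑ j ∈ Finset.range 3, w γ j := by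
      intro n
      rw [hsplit n]
      have := sum_w_neg γ hγ1 hγ2 (n + 1) (by omega)
      rw [show n + 1 + 2 = n + 3 from rfl] at this
      linarith
    have hsum3 : Summable fun i : ℕ => w γ (i + 3) :=
      summable_of_sum_range_le (fun k => w_nonneg γ hγ1 hγ2 k) hbound
    have hsum : Summable fun j : ℕ => w γ j := (summable_nat_add_iff 3).mp hsum3
    have h1 := hsum.hasSum.tendsto_sum_nat
    have h2 := tendsto_partial_sums γ hγ1 hγ2
    have : ∑' j, w γ j = 0 := tendsto_nhds_unique h1 h2
    exact this ▸ hsum.hasSum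
  · intro n hn
    obtain ⟨m, rfl⟩ : ∃ m, n = m + 2 := ⟨n - 2, by omega⟩
    have := sum_w_neg γ hγ1 hγ2 (m + 1) (by omega)
    rw [show m + 1 + 2 = m + 2 + 1 from rfl] at this
    exact this
end

section
/- Let γ ∈ (1,2). Then for every ξ ∈ ℝ the symbol f_γ admits the closed form f_γ(ξ) := -∑_{k=-1}^∞ w_{k+1}^{(γ)} e^{i k ξ} = -[(2 - γ(1 - e^{-iξ}))/2] · (1 + e^{i(ξ+π)})^γ, where z^γ for a complex number z with |z| ≤ 1 is defined through the binomial series (1+u)^γ = ∑_{k=0}^∞ (γ choose k) u^k applied with u = e^{i(ξ+π)} (equivalently, the principal branch of the power, with the value 0 at u = -1). -/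
open scoped Real Topology

/-- The symbol `f_γ(ξ) = -∑_{k=-1}^∞ w_{k+1}^{(γ)} e^{ikξ}`
(written as a sum over `k+1 ∈ ℕ`). -/
noncomputable def fsym (γ : ℝ) (ξ : ℝ) : ℂ :=
  -∑' k : ℕ, (w γ k : ℂ) * Complex.exp (Complex.I * ((k : ℂ) - 1) * (ξ : ℂ))

/-- Generalized binomial coefficient `(γ choose k) = γ(γ-1)⋯(γ-k+1)/k!`. -/
noncomputable def binom (γ : ℝ) (k : ℕ) : ℝ :=
  (∏ i ∈ Finset.range k, (γ - i)) / (Nat.factorial k)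

lemma prod_bound (γ : ℝ) (hγ1 : 1 < γ) (hγ2 : γ < 2) :
    ∀ k, 2 ≤ k → |∏ i ∈ Finset.range k, (γ - i)| ≤ γ * (γ - 1) * (Nat.factorial (k - 2)) := by
  intro k hk
  induction k with
  | zero => omega
  | succ n ih =>
    rcases Nat.lt_or_ge n 2 with h | h
    · have hn1 : n = 1 := by omega
      subst hn1
      simp [Finset.prod_range_succ]
      rw [abs_of_nonneg (by nlinarith)]
      rw [abs_of_nonneg (by linarith : (0:ℝ) ≤ γ - 1)]
    · have hn := ih h
      rw [Finset.prod_range_succ, abs_mul]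
      have hcn : (2:ℝ) ≤ n := by exact_mod_cast h
      have h1 : |γ - n| ≤ (n - 1 : ℝ) := by
        rw [abs_le]; constructor <;> nlinarith
      have h2 : n + 1 - 2 = (n - 2) + 1 := by omega
      rw [h2, Nat.factorial_succ]
      have h3 : ((n-2:ℕ)+1 : ℝ) = (n - 1 : ℝ) := by
        push_cast [Nat.cast_sub h]
        ring
      have hfpos : (0:ℝ) ≤ (Nat.factorial (n-2) : ℝ) := by positivity
      push_cast
      calc |∏ i ∈ Finset.range n, (γ - i)| * |γ - n|
          ≤ (γ * (γ-1) * (Nat.factorial (n-2))) * (n - 1 : ℝ) := by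
            apply mul_le_mul hn h1 (abs_nonneg _)
            have := mul_nonneg (mul_nonneg (by linarith : (0:ℝ) ≤ γ) (by linarith : (0:ℝ) ≤ γ-1)) hfpos
            linarith
        _ = γ * (γ-1) * (((n-2:ℕ)+1 : ℝ) * (Nat.factorial (n-2))) := by rw [h3]; ring

lemma gcoef_abs_le (γ : ℝ) (hγ1 : 1 < γ) (hγ2 : γ < 2) (k : ℕ) (hk : 2 ≤ k) :
    |gcoef γ k| ≤ 2 * (γ * (γ - 1)) / (k : ℝ)^2 := by
  have hp := prod_bound γ hγ1 hγ2 k hk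
  have hfk : (Nat.factorial k : ℝ) = (k : ℝ) * ((k:ℝ) - 1) * (Nat.factorial (k - 2)) := by
    obtain ⟨m, rfl⟩ : ∃ m, k = m + 2 := ⟨k - 2, by omega⟩
    simp [Nat.factorial_succ]
    ring
  have hck : (2:ℝ) ≤ k := by exact_mod_cast hk
  have hfpos : (0:ℝ) < (Nat.factorial (k-2) : ℝ) := by positivity
  have : |gcoef γ k| = |∏ i ∈ Finset.range k, (γ - i)| / (Nat.factorial k : ℝ) := by
    rw [gcoef, abs_mul, abs_div, abs_pow, abs_neg, abs_one, one_pow]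
    rw [Nat.abs_cast]
    ring
  rw [this, hfk]
  rw [div_le_div_iff₀ (by nlinarith [mul_pos (mul_pos (by linarith : (0:ℝ) < k) (by linarith : (0:ℝ) < (k:ℝ)-1)) hfpos]) (by positivity)]
  calc |∏ i ∈ Finset.range k, (γ - i)| * (k:ℝ)^2
      ≤ (γ * (γ-1) * (Nat.factorial (k-2))) * (k:ℝ)^2 := by
        apply mul_le_mul_of_nonneg_right hp (by positivity)
    _ ≤ 2 * (γ * (γ - 1)) * ((k:ℝ) * ((k:ℝ)-1) * (Nat.factorial (k-2))) := by
        have hnn : (0:ℝ) ≤ γ * (γ-1) * (Nat.factorial (k-2)) :=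
          mul_nonneg (mul_nonneg (by linarith) (by linarith)) hfpos.le
        have hk2 : (k:ℝ)^2 ≤ 2 * ((k:ℝ) * ((k:ℝ)-1)) := by nlinarith
        nlinarith [mul_le_mul_of_nonneg_left hk2 hnn]

lemma gcoef_summable (γ : ℝ) (hγ1 : 1 < γ) (hγ2 : γ < 2) :
    Summable (fun k => gcoef γ k) := by
  rw [← summable_nat_add_iff 2]
  have hs : Summable (fun k : ℕ => 2 * (γ * (γ - 1)) * (1 / ((k + 2) : ℝ)^2)) := by
    apply Summable.mul_left
    have : Summable (fun k : ℕ => 1 / (k : ℝ)^2) :=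
      Real.summable_one_div_nat_pow.mpr one_lt_two
    have := (summable_nat_add_iff 2).mpr this
    convert this using 2 with k
    push_cast
    · rfl
    push_cast
    rfl
  apply Summable.of_norm_bounded hs
  intro k
  have := gcoef_abs_le γ hγ1 hγ2 (k + 2) (by omega)
  simp only [Real.norm_eq_abs]
  calc |gcoef γ (k + 2)| ≤ 2 * (γ * (γ - 1)) / ((k+2) : ℝ)^2 := by push_cast at this ⊢; linarith
    _ = 2 * (γ * (γ - 1)) * (1 / ((k + 2) : ℝ)^2) := by ring

lemma gcoef_eq_binom (γ : ℝ) (k : ℕ) : gcoef γ k = (-1 : ℝ)^k * binom γ k := by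
  rw [gcoef, binom]; ring

lemma gcoef_zero (γ : ℝ) : gcoef γ 0 = 1 := by simp [gcoef]

/-- Closed form of the symbol:
`f_γ(ξ) = -[(2 - γ(1 - e^{-iξ}))/2] · (1 + e^{i(ξ+π)})^γ`, where the fractional power
`(1+u)^γ` is defined through the binomial series `∑_{k=0}^∞ (γ choose k) u^k`
with `u = e^{i(ξ+π)}`. -/
theorem fsym_closed_form (γ : ℝ) (hγ1 : 1 < γ) (hγ2 : γ < 2) (ξ : ℝ) :
    fsym γ ξ =
      -((2 - (γ : ℂ) * (1 - Complex.exp (-Complex.I * (ξ : ℂ)))) / 2) *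
        ∑' k : ℕ, (binom γ k : ℂ) * Complex.exp (Complex.I * ((ξ : ℂ) + (Real.pi : ℂ))) ^ k := by
  classical
  set z : ℂ := Complex.exp (Complex.I * ξ) with hzdef
  set e : ℂ := Complex.exp (-Complex.I * ξ) with hedef
  have hze : z * e = 1 := by
    rw [hzdef, hedef, ← Complex.exp_add]
    rw [show Complex.I * ξ + -Complex.I * ξ = 0 by ring, Complex.exp_zero]
  have hznorm : ‖z‖ = 1 := by
    rw [hzdef, Complex.norm_exp]
    simp [Complex.mul_re]
  have hg := gcoef_summable γ hγ1 hγ2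
  -- summability of the binomial series in ℂ
  have hGsum : Summable (fun k : ℕ => (gcoef γ k : ℂ) * z ^ k) := by
    apply Summable.of_norm_bounded hg.abs
    intro k
    rw [norm_mul, norm_pow, hznorm]
    simp [Complex.norm_real]
  set S : ℂ := ∑' k : ℕ, (gcoef γ k : ℂ) * z ^ k with hSdef
  -- summability of the weights
  have hw1 : Summable (fun k => w γ (k + 1)) := by
    have h1 : Summable (fun k => γ / 2 * gcoef γ (k + 1)) :=
      ((summable_nat_add_iff 1).mpr hg).mul_left _
    have h2 : Summable (fun k => (2 - γ) / 2 * gcoef γ k) := hg.mul_left _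
    exact (h1.add h2 : _)
  have hw : Summable (w γ) := (summable_nat_add_iff 1).mp hw1
  have hWsum : Summable (fun k : ℕ => (w γ k : ℂ) * z ^ k) := by
    apply Summable.of_norm_bounded hw.abs
    intro k
    rw [norm_mul, norm_pow, hznorm]
    simp [Complex.norm_real]
  -- rewrite the exponentials in fsym
  have hzk : ∀ k : ℕ, Complex.exp (Complex.I * ((k : ℂ) - 1) * ξ) = z ^ k * e := by
    intro k
    rw [hzdef, hedef, ← Complex.exp_nat_mul, ← Complex.exp_add]
    congr 1
    ring
  have hfsym : fsym γ ξ = -((∑' k : ℕ, (w γ k : ℂ) * z ^ k) * e) := by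
    rw [fsym, ← tsum_mul_right]
    congr 1
    exact tsum_congr fun k => by rw [hzk k, mul_assoc]
  -- compute the weight series
  have hshiftS : ∑' k : ℕ, (gcoef γ (k + 1) : ℂ) * z ^ (k + 1) = S - 1 := by
    have := hGsum.tsum_eq_zero_add
    rw [← hSdef] at this
    rw [gcoef_zero] at this
    simp only [pow_zero, Complex.ofReal_one, one_mul] at this
    linear_combination -this
  have hW : (∑' k : ℕ, (w γ k : ℂ) * z ^ k) = (γ / 2 + (2 - γ) / 2 * z) * S := by
    rw [hWsum.tsum_eq_zero_add]
    have hterm : ∀ k : ℕ, (w γ (k + 1) : ℂ) * z ^ (k + 1) =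
        (γ / 2 : ℂ) * ((gcoef γ (k + 1) : ℂ) * z ^ (k + 1)) +
        ((2 - γ) / 2 * z : ℂ) * ((gcoef γ k : ℂ) * z ^ k) := by
      intro k
      have : w γ (k + 1) = γ / 2 * gcoef γ (k + 1) + (2 - γ) / 2 * gcoef γ k := rfl
      rw [this]
      push_cast
      ring
    rw [tsum_congr hterm]
    have hA : Summable (fun k : ℕ => (γ / 2 : ℂ) * ((gcoef γ (k + 1) : ℂ) * z ^ (k + 1))) :=
      ((summable_nat_add_iff 1).mpr hGsum).mul_left _
    have hB : Summable (fun k : ℕ => ((2 - γ) / 2 * z : ℂ) * ((gcoef γ k : ℂ) * z ^ k)) :=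
      hGsum.mul_left _
    rw [Summable.tsum_add hA hB, tsum_mul_left, tsum_mul_left, hshiftS, ← hSdef]
    have hw0 : w γ 0 = γ / 2 := by rw [show w γ 0 = γ / 2 * gcoef γ 0 from rfl, gcoef_zero, mul_one]
    rw [hw0]
    push_cast
    ring
  -- identify the RHS series with S
  have hexp : Complex.exp (Complex.I * ((ξ : ℂ) + (Real.pi : ℂ))) = -z := by
    rw [show Complex.I * ((ξ : ℂ) + (Real.pi : ℂ)) = Complex.I * ξ + (Real.pi : ℂ) * Complex.I by ring,
      Complex.exp_add, Complex.exp_pi_mul_I, hzdef]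
    ring
  have hRHS : (∑' k : ℕ, (binom γ k : ℂ) * Complex.exp (Complex.I * ((ξ : ℂ) + (Real.pi : ℂ))) ^ k) = S := by
    rw [hSdef]
    apply tsum_congr
    intro k
    rw [hexp, gcoef_eq_binom]
    push_cast
    ring
  rw [hfsym, hW, hRHS]
  have : (γ / 2 + (2 - γ) / 2 * z) * S * e = (γ / 2 * e + (2 - γ) / 2) * S := by
    have : (γ / 2 + (2 - γ) / 2 * z) * S * e = (γ / 2 * e + (2 - γ) / 2 * (z * e)) * S := by ring
    rw [this, hze]
    ring
  rw [this]
  ring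
end
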